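/- Let M, K, h, β be real numbers with M > 0, K > 0, h > 0 and β arbitrary, and set α := K/(M + K β h²) (assuming M + K β h² ≠ 0). If real sequences (x_k), (v_k), (a_k) satisfy x_{k+1} = x_k + h v_k + ½ h² a_k, v_{k+1} = v_k + ½ h (a_k + a_{k+1}), and M a_k = −K x_k − K β h² a_k for all k, then for all k the vector (x_{k+1}, v_{k+1}) equals A (x_k, v_k), where A is the 2×2 matrix [[1 − α h²/2, h], [α h (α h²/4 − 1), 1 − α h²/2]]. -/

import Mathlib

open Matrix

/-- For the SyLiPN recursion applied to the scalar quadratic potential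
`V(x) = ½ K x²` with mass `M`, timestep `h` and parameter `β` (with `M + K β h² ≠ 0`),
the one-step update `(x_k, v_k) ↦ (x_{k+1}, v_{k+1})` is given by the matrix
`A = [[1 − α h²/2, h], [α h (α h²/4 − 1), 1 − α h²/2]]` with `α = K/(M + K β h²)`. -/
theorem stmt_2 (M K h β : ℝ) (hM : 0 < M) (hK : 0 < K) (hh : 0 < h)
    (hne : M + K * β * h ^ 2 ≠ 0)
    (x v a : ℕ → ℝ)
    (hx : ∀ k, x (k + 1) = x k + h * v k + (1 / 2) * h ^ 2 * a k)
    (hv : ∀ k, v (k + 1) = v k + (1 / 2) * h * (a k + a (k + 1)))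
    (ha : ∀ k, M * a k = -K * x k - K * β * h ^ 2 * a k) :
    let α : ℝ := K / (M + K * β * h ^ 2)
    let A : Matrix (Fin 2) (Fin 2) ℝ :=
      !![1 - α * h ^ 2 / 2, h; α * h * (α * h ^ 2 / 4 - 1), 1 - α * h ^ 2 / 2]
    ∀ k, ![x (k + 1), v (k + 1)] = A.mulVec ![x k, v k] := by
  intro α A k
  have key : ∀ k, a k = -α * x k := by
    intro k
    have h1 := ha k
    have : (M + K * β * h ^ 2) * a k = -K * x k := by ring_nf; ring_nf at h1; linarith
    simp only [α]
    field_simp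
    linarith [this]
  have hxk := hx k
  have hvk := hv k
  rw [key k, key (k+1)] at hvk
  rw [key k] at hxk
  rw [hxk] at hvk
  funext i
  fin_cases i <;>
    simp [A, Matrix.mulVec, dotProduct, Fin.sum_univ_two, hxk, hvk] <;> ring
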